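/- Lower and upper bounds on the acceleration product: let λ ≥ 1, π, τ₁ > 0, γ_k > 0, and let θ_k ∈ [0,1) and c_k be defined by c_0 = 1, c_{k+1} = (1−θ_k)c_k, with θ_k determined by τ₁ γ_k θ_k^λ = π c_k (1 − θ_k). Then for all N ≥ 1, (1 + (π/τ₁)^{1/λ} Σ_{k=0}^{N−1} γ_k^{-1/λ})^{-λ} ≤ c_N ≤ (1 + λ^{-1}(π/τ₁)^{1/λ} Σ_{k=0}^{N−1} γ_k^{-1/λ})^{-λ}. -/

import Mathlib

open Real Finset

theorem acceleration_product_bounds (lam pii tau1 : ℝ)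
    (hlam : 1 ≤ lam) (hpi : 0 < pii) (htau : 0 < tau1)
    (γ θ c : ℕ → ℝ) (hγ : ∀ k, 0 < γ k)
    (hθ : ∀ k, θ k ∈ Set.Ico (0 : ℝ) 1)
    (hc0 : c 0 = 1) (hcrec : ∀ k, c (k + 1) = (1 - θ k) * c k)
    (heq : ∀ k, tau1 * γ k * θ k ^ lam = pii * c k * (1 - θ k)) :
    ∀ N ≥ 1,
      (1 + (pii / tau1) ^ (1 / lam) *
          ∑ k ∈ Finset.range N, γ k ^ (-(1 / lam))) ^ (-lam) ≤ c N ∧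
      c N ≤ (1 + lam⁻¹ * (pii / tau1) ^ (1 / lam) *
          ∑ k ∈ Finset.range N, γ k ^ (-(1 / lam))) ^ (-lam) := by
  have hlam0 : (0:ℝ) < lam := lt_of_lt_of_le one_pos hlam
  have hlamne : lam ≠ 0 := hlam0.ne'
  have hinvle : 1 / lam ≤ 1 := by
    rw [div_le_one hlam0]; exact hlam
  have hinvpos : 0 < 1 / lam := by positivity
  have hcpos : ∀ k, 0 < c k := by
    intro k
    induction k with
    | zero => rw [hc0]; exact one_pos
    | succ n ih =>
      rw [hcrec n]
      exact mul_pos (by linarith [(hθ n).2]) ih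
  have hθpos : ∀ k, 0 < θ k := by
    intro k
    rcases lt_or_eq_of_le (hθ k).1 with h | h
    · exact h
    · exfalso
      have h1 := heq k
      rw [← h, Real.zero_rpow hlamne, mul_zero] at h1
      have hr : 0 < pii * c k := mul_pos hpi (hcpos k)
      nlinarith
  set a : ℕ → ℝ := fun k => c k ^ (-(1/lam)) with ha
  have hapos : ∀ k, 0 < a k := fun k => Real.rpow_pos_of_pos (hcpos k) _
  have ha0 : a 0 = 1 := by simp [ha, hc0]
  set w : ℕ → ℝ := fun k => (pii / tau1) ^ (1/lam) * γ k ^ (-(1/lam)) with hw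
  have hwpos : ∀ k, 0 < w k :=
    fun k => mul_pos (Real.rpow_pos_of_pos (div_pos hpi htau) _)
      (Real.rpow_pos_of_pos (hγ k) _)
  -- key identity: a (k+1) * θ k = w k
  have hkey : ∀ k, a (k+1) * θ k = w k := by
    intro k
    have hθk : θ k = (pii * c (k+1) / (tau1 * γ k)) ^ (1/lam) := by
      have h1 : θ k ^ lam = pii * c (k+1) / (tau1 * γ k) := by
        rw [hcrec k]
        rw [eq_div_iff (mul_pos htau (hγ k)).ne']
        have h2 := heq k
        ring_nf
        ring_nf at h2
        linarith
      have h2 : ((θ k) ^ lam) ^ (1/lam) = θ k := by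
        rw [← Real.rpow_mul (hθ k).1, mul_one_div_cancel hlamne, Real.rpow_one]
      rw [← h1, h2]
    rw [hθk]
    have hsplit : (pii * c (k+1) / (tau1 * γ k)) ^ (1/lam)
        = (pii/tau1) ^ (1/lam) * (γ k)⁻¹ ^ (1/lam) * c (k+1) ^ (1/lam) := by
      rw [← Real.mul_rpow (div_pos hpi htau).le (inv_nonneg.mpr (hγ k).le),
          ← Real.mul_rpow (mul_nonneg (div_pos hpi htau).le (inv_nonneg.mpr (hγ k).le)) (le_of_lt (hcpos (k+1)))]
      congr 1
      field_simp
    rw [hsplit, ha]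
    have hc1 : c (k+1) ^ (-(1/lam)) * c (k+1) ^ (1/lam) = 1 := by
      rw [← Real.rpow_add (hcpos (k+1))]
      norm_num
    have hγinv : (γ k)⁻¹ ^ (1/lam) = γ k ^ (-(1/lam)) := by
      rw [Real.inv_rpow (le_of_lt (hγ k)), Real.rpow_neg (le_of_lt (hγ k))]
    rw [hγinv, hw]
    calc c (k+1) ^ (-(1/lam)) * ((pii/tau1) ^ (1/lam) * γ k ^ (-(1/lam)) * c (k+1) ^ (1/lam))
        = (c (k+1) ^ (-(1/lam)) * c (k+1) ^ (1/lam)) * ((pii/tau1) ^ (1/lam) * γ k ^ (-(1/lam))) := by ring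
      _ = (pii/tau1) ^ (1/lam) * γ k ^ (-(1/lam)) := by rw [hc1, one_mul]
  -- a k = a (k+1) * (1 - θ k) ^ (1/lam)
  have hastep : ∀ k, a k = a (k+1) * (1 - θ k) ^ (1/lam) := by
    intro k
    have h1θ : 0 < 1 - θ k := by linarith [(hθ k).2]
    have : a (k+1) = (1-θ k) ^ (-(1/lam)) * a k := by
      simp only [ha]
      rw [hcrec k, Real.mul_rpow (le_of_lt h1θ) (le_of_lt (hcpos k))]
    rw [this]
    have h2 : (1-θ k) ^ (-(1/lam)) * (1-θ k) ^ (1/lam) = 1 := by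
      rw [← Real.rpow_add h1θ]; norm_num
    calc a k = ((1-θ k) ^ (-(1/lam)) * (1-θ k) ^ (1/lam)) * a k := by rw [h2, one_mul]
      _ = (1-θ k) ^ (-(1/lam)) * a k * (1-θ k) ^ (1/lam) := by ring
  -- step bounds
  have hstep : ∀ k, lam⁻¹ * w k ≤ a (k+1) - a k ∧ a (k+1) - a k ≤ w k := by
    intro k
    have h1θ : 0 < 1 - θ k := by linarith [(hθ k).2]
    have hdiff : a (k+1) - a k = a (k+1) * (1 - (1 - θ k) ^ (1/lam)) := by
      rw [hastep k]; ring
    constructor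
    · -- Bernoulli: (1-θ)^(1/λ) ≤ 1 - θ/λ
      have hb : (1 - θ k) ^ (1/lam) ≤ 1 + (1/lam) * (-(θ k)) := by
        have := rpow_one_add_le_one_add_mul_self
          (s := -(θ k)) (by linarith [(hθ k).2]) (p := 1/lam) hinvpos.le hinvle
        simpa [← sub_eq_add_neg] using this
      have h2 : (1/lam) * θ k ≤ 1 - (1 - θ k) ^ (1/lam) := by linarith
      have h3 : a (k+1) * ((1/lam) * θ k) ≤ a (k+1) * (1 - (1 - θ k) ^ (1/lam)) :=
        mul_le_mul_of_nonneg_left h2 (hapos (k+1)).le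
      rw [hdiff]
      calc lam⁻¹ * w k = (1/lam) * (a (k+1) * θ k) := by rw [hkey k, one_div]
        _ = a (k+1) * ((1/lam) * θ k) := by ring
        _ ≤ _ := h3
    · have hb : (1 - θ k) ≤ (1 - θ k) ^ (1/lam) := by
        have := Real.rpow_le_rpow_of_exponent_ge h1θ (by linarith [hθpos k]) hinvle
        rwa [Real.rpow_one] at this
      have h2 : 1 - (1 - θ k) ^ (1/lam) ≤ θ k := by linarith
      have h3 : a (k+1) * (1 - (1 - θ k) ^ (1/lam)) ≤ a (k+1) * θ k :=
        mul_le_mul_of_nonneg_left h2 (hapos (k+1)).le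
      rw [hdiff, ← hkey k]
      exact h3
  -- summed bounds
  have hsum : ∀ N, 1 + lam⁻¹ * ∑ k ∈ range N, w k ≤ a N ∧
      a N ≤ 1 + ∑ k ∈ range N, w k := by
    intro N
    induction N with
    | zero => simp [ha0]
    | succ n ih =>
      rw [Finset.sum_range_succ]
      obtain ⟨hl, hu⟩ := hstep n
      constructor
      · calc 1 + lam⁻¹ * (∑ k ∈ range n, w k + w n)
            = (1 + lam⁻¹ * ∑ k ∈ range n, w k) + lam⁻¹ * w n := by ring
          _ ≤ a n + (a (n+1) - a n) := add_le_add ih.1 hl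
          _ = a (n+1) := by ring
      · calc a (n+1) = a n + (a (n+1) - a n) := by ring
          _ ≤ (1 + ∑ k ∈ range n, w k) + w n := add_le_add ih.2 hu
          _ = 1 + (∑ k ∈ range n, w k + w n) := by ring
  intro N _
  have hca : c N = a N ^ (-lam) := by
    rw [ha]
    rw [← Real.rpow_mul (hcpos N).le]
    rw [show -(1/lam) * -lam = (1:ℝ) by field_simp]
    rw [Real.rpow_one]
  have hSsum : (pii / tau1) ^ (1/lam) * ∑ k ∈ range N, γ k ^ (-(1/lam))
      = ∑ k ∈ range N, w k := by
    rw [Finset.mul_sum]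
  have hSnn : 0 ≤ ∑ k ∈ range N, w k :=
    Finset.sum_nonneg fun k _ => (hwpos k).le
  obtain ⟨hl, hu⟩ := hsum N
  constructor
  · rw [hca, hSsum]
    exact Real.rpow_le_rpow_of_nonpos (hapos N) hu (neg_nonpos.mpr hlam0.le)
  · rw [hca, mul_assoc, hSsum]
    have hpos1 : 0 < 1 + lam⁻¹ * ∑ k ∈ range N, w k := by positivity
    exact Real.rpow_le_rpow_of_nonpos hpos1 hl (neg_nonpos.mpr hlam0.le)
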